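/- For every real u ≥ 0, the 2×2 Wronskian-type determinant satisfies Φ(u)Φ''(u) - Φ'(u)^2 < 0, i.e. det [[Φ(u), Φ'(u)], [Φ'(u), Φ''(u)]] < 0, where Φ', Φ'' denote the first and second derivatives of Φ. -/

import Mathlib

open Real

/-- The Riemann ξ-related function
`Φ(u) = ∑_{m=1}^∞ (2π²m⁴e^{9u} - 3πm²e^{5u}) exp(-πm²e^{4u})`. -/
noncomputable def Phi (u : ℝ) : ℝ :=
  ∑' m : ℕ, (2 * π^2 * ((m : ℝ) + 1)^4 * Real.exp (9*u)
      - 3 * π * ((m : ℝ) + 1)^2 * Real.exp (5*u))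
    * Real.exp (-π * ((m : ℝ) + 1)^2 * Real.exp (4*u))

set_option maxHeartbeats 1000000

noncomputable def fe (m : ℕ) (u : ℝ) : ℝ :=
  (2*π^2*((m:ℝ)+1)^4*(exp u)^9 - 3*π*((m:ℝ)+1)^2*(exp u)^5)
    * exp (-(π*((m:ℝ)+1)^2) * (exp u)^4)

noncomputable def ge (m : ℕ) (u : ℝ) : ℝ :=
  (-8*π^3*((m:ℝ)+1)^6*(exp u)^13 + 30*π^2*((m:ℝ)+1)^4*(exp u)^9 - 15*π*((m:ℝ)+1)^2*(exp u)^5)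
    * exp (-(π*((m:ℝ)+1)^2) * (exp u)^4)

noncomputable def he (m : ℕ) (u : ℝ) : ℝ :=
  (32*π^4*((m:ℝ)+1)^8*(exp u)^17 - 224*π^3*((m:ℝ)+1)^6*(exp u)^13
    + 330*π^2*((m:ℝ)+1)^4*(exp u)^9 - 75*π*((m:ℝ)+1)^2*(exp u)^5)
    * exp (-(π*((m:ℝ)+1)^2) * (exp u)^4)

lemma Phi_eq (u : ℝ) : Phi u = ∑' m, fe m u := by
  unfold Phi fe
  congr 1; funext m
  rw [show (9:ℝ)*u = ((9:ℕ):ℝ)*u by norm_num, show (5:ℝ)*u = ((5:ℕ):ℝ)*u by norm_num,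
    show (4:ℝ)*u = ((4:ℕ):ℝ)*u by norm_num, Real.exp_nat_mul, Real.exp_nat_mul, Real.exp_nat_mul]
  ring_nf

lemma hasDerivAt_fe (m : ℕ) (u : ℝ) : HasDerivAt (fe m) (ge m u) u := by
  have hE : HasDerivAt (fun u : ℝ => exp u) (exp u) u := Real.hasDerivAt_exp u
  have hP : HasDerivAt (fun u : ℝ => 2*π^2*((m:ℝ)+1)^4*(exp u)^9 - 3*π*((m:ℝ)+1)^2*(exp u)^5)
      (2*π^2*((m:ℝ)+1)^4*(9*(exp u)^8*exp u) - 3*π*((m:ℝ)+1)^2*(5*(exp u)^4*exp u)) u :=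
    ((hE.pow 9).const_mul _).sub ((hE.pow 5).const_mul _)
  have hQ := ((hE.fun_pow 4).const_mul (-(π*((m:ℝ)+1)^2))).exp
  exact (hP.fun_mul hQ).congr_deriv (by unfold ge; push_cast; ring)

lemma hasDerivAt_ge (m : ℕ) (u : ℝ) : HasDerivAt (ge m) (he m u) u := by
  have hE : HasDerivAt (fun u : ℝ => exp u) (exp u) u := Real.hasDerivAt_exp u
  have hP : HasDerivAt (fun u : ℝ => -8*π^3*((m:ℝ)+1)^6*(exp u)^13 + 30*π^2*((m:ℝ)+1)^4*(exp u)^9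
        - 15*π*((m:ℝ)+1)^2*(exp u)^5)
      (-8*π^3*((m:ℝ)+1)^6*(13*(exp u)^12*exp u) + 30*π^2*((m:ℝ)+1)^4*(9*(exp u)^8*exp u)
        - 15*π*((m:ℝ)+1)^2*(5*(exp u)^4*exp u)) u :=
    (((hE.pow 13).const_mul _).add ((hE.pow 9).const_mul _)).sub ((hE.pow 5).const_mul _)
  have hQ := ((hE.fun_pow 4).const_mul (-(π*((m:ℝ)+1)^2))).exp
  exact (hP.fun_mul hQ).congr_deriv (by unfold he; push_cast; ring)

lemma mono_bound (a : ℕ) (M : ℝ) (hM : 1 ≤ M) (u : ℝ) (hu : -1 ≤ u) :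
    M^(2*a) * (exp u)^(4*a+1) * exp (-(π*M^2*(exp u)^4))
      ≤ ((a+1).factorial : ℝ) * exp 3 / (π^(a+1) * M^2) := by
  have hM0 : (0:ℝ) < M := lt_of_lt_of_le one_pos hM
  have hpi := Real.pi_pos
  rw [le_div_iff₀ (by positivity)]
  have hE0 : 0 < exp u := exp_pos u
  set E := exp u with hE
  set t : ℝ := π*M^2 * E^4 with ht
  have ht0 : 0 < t := by positivity
  have h1 : t^(a+1) / ((a+1).factorial : ℝ) ≤ exp t := by
    calc t^(a+1) / ((a+1).factorial:ℝ)
        ≤ ∑ i ∈ Finset.range (a+2), t^i / (i.factorial:ℝ) :=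
          Finset.single_le_sum (f := fun i => t^i / (i.factorial:ℝ))
            (fun i _ => by positivity) (Finset.mem_range.mpr (by omega))
      _ ≤ exp t := Real.sum_le_exp_of_nonneg ht0.le _
  have h2 : exp (-t) * t^(a+1) ≤ ((a+1).factorial : ℝ) := by
    rw [div_le_iff₀ (by positivity)] at h1
    calc exp (-t) * t^(a+1) ≤ exp (-t) * (exp t * ((a+1).factorial:ℝ)) := by
          apply mul_le_mul_of_nonneg_left h1 (exp_pos _).le
      _ = ((a+1).factorial:ℝ) := by rw [← mul_assoc, ← Real.exp_add]; simp
  have h3 : 1 ≤ E^3 * exp 3 := by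
    have h4 : 1 ≤ E * exp 1 := by
      rw [hE, ← Real.exp_add]
      have : (0:ℝ) ≤ u + 1 := by linarith
      calc (1:ℝ) = exp 0 := by simp
        _ ≤ exp (u+1) := exp_le_exp.mpr this
    have h5 : exp 1 ^ 3 = exp 3 := by rw [← Real.exp_nat_mul]; norm_num
    calc (1:ℝ) = 1^3 := by norm_num
      _ ≤ (E * exp 1)^3 := pow_le_pow_left₀ one_pos.le h4 3
      _ = E^3 * exp 3 := by rw [mul_pow, h5]
  have hid : M^(2*a) * E^(4*a+1) * exp (-(π*M^2*E^4)) * (π^(a+1) * M^2) * E^3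
      = exp (-t) * t^(a+1) := by
    rw [ht, mul_pow, mul_pow, ← pow_mul, ← pow_mul]; ring
  calc M^(2*a) * E^(4*a+1) * exp (-(π*M^2*E^4)) * (π^(a+1)*M^2)
      ≤ M^(2*a) * E^(4*a+1) * exp (-(π*M^2*E^4)) * (π^(a+1)*M^2) * (E^3 * exp 3) :=
        le_mul_of_one_le_right (by positivity) h3
    _ = (exp (-t) * t^(a+1)) * exp 3 := by rw [← hid]; ring
    _ ≤ ((a+1).factorial:ℝ) * exp 3 :=
        mul_le_mul_of_nonneg_right h2 (by positivity)


lemma exp3_le : exp 3 ≤ 20.1 := by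
  have h : exp 3 = exp 1 ^ 3 := by
    rw [← Real.exp_nat_mul]; norm_num
  have h1 : exp 1 < 2.7182818286 := by
    have := Real.exp_one_lt_d9; linarith
  have h2 : exp 1 ^ 2 ≤ 7.4 := by nlinarith [Real.exp_pos 1]
  rw [h]; nlinarith [Real.exp_pos 1]

lemma abs_fe_le' (m : ℕ) (u : ℝ) (hu : -1 ≤ u) :
    |(2*π^2*((m:ℝ)+1)^4*(exp u)^9 - 3*π*((m:ℝ)+1)^2*(exp u)^5)
    * exp (-(π*((m:ℝ)+1)^2) * (exp u)^4)| ≤ 200 / ((m:ℝ)+1)^2 := by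
  have hm : (0:ℝ) ≤ (m:ℝ) := Nat.cast_nonneg m
  set M : ℝ := (m:ℝ)+1 with hMdef
  have hM : (1:ℝ) ≤ M := by linarith
  have hM0 : (0:ℝ) < M := by linarith
  have hπ := Real.pi_pos
  have hE0 := exp_pos u
  rw [show -(π*M^2) * (exp u)^4 = -(π*M^2*(exp u)^4) by ring]
  have hQ0 : 0 < exp (-(π*M^2*(exp u)^4)) := exp_pos _
  have b2 := mono_bound 2 M hM u hu
  have b1 := mono_bound 1 M hM u hu
  norm_num [Nat.factorial] at b2 b1
  have habs : |(2*π^2*M^4*(exp u)^9 - 3*π*M^2*(exp u)^5) * exp (-(π*M^2*(exp u)^4))|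
      ≤ 2*π^2*(M^4*(exp u)^9*exp (-(π*M^2*(exp u)^4)))
        + 3*π*(M^2*(exp u)^5*exp (-(π*M^2*(exp u)^4))) := by
    rw [abs_mul, abs_of_pos hQ0]
    have h1 : (0:ℝ) ≤ 2*π^2*M^4*(exp u)^9 := by positivity
    have h2 : (0:ℝ) ≤ 3*π*M^2*(exp u)^5 := by positivity
    have h3 : |2*π^2*M^4*(exp u)^9 - 3*π*M^2*(exp u)^5|
        ≤ 2*π^2*M^4*(exp u)^9 + 3*π*M^2*(exp u)^5 := by
      rw [abs_le]; constructor <;> linarith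
    nlinarith [mul_le_mul_of_nonneg_right h3 hQ0.le]
  refine habs.trans ?_
  calc 2*π^2*(M^4*(exp u)^9*exp (-(π*M^2*(exp u)^4)))
        + 3*π*(M^2*(exp u)^5*exp (-(π*M^2*(exp u)^4)))
      ≤ 2*π^2*(6*exp 3/(π^3*M^2)) + 3*π*(2*exp 3/(π^2*M^2)) := by
        have := add_le_add (mul_le_mul_of_nonneg_left b2 (by positivity : (0:ℝ) ≤ 2*π^2))
          (mul_le_mul_of_nonneg_left b1 (by positivity : (0:ℝ) ≤ 3*π))
        linarith
    _ = 18*exp 3/(π*M^2) := by field_simp; ring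
    _ ≤ 200 / M^2 := by
        rw [div_le_div_iff₀ (by positivity) (by positivity)]
        have hM2 : (0:ℝ) < M^2 := by positivity
        nlinarith [exp3_le, Real.pi_gt_d6, hM2, Real.exp_pos 3]


lemma abs_ge_le' (m : ℕ) (u : ℝ) (hu : -1 ≤ u) :
    |(-8*π^3*((m:ℝ)+1)^6*(exp u)^13 + 30*π^2*((m:ℝ)+1)^4*(exp u)^9 - 15*π*((m:ℝ)+1)^2*(exp u)^5)
    * exp (-(π*((m:ℝ)+1)^2) * (exp u)^4)| ≤ 3000 / ((m:ℝ)+1)^2 := by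
  have hm : (0:ℝ) ≤ (m:ℝ) := Nat.cast_nonneg m
  set M : ℝ := (m:ℝ)+1 with hMdef
  have hM : (1:ℝ) ≤ M := by linarith
  have hM0 : (0:ℝ) < M := by linarith
  have hπ := Real.pi_pos
  have hE0 := exp_pos u
  rw [show -(π*M^2) * (exp u)^4 = -(π*M^2*(exp u)^4) by ring]
  have hQ0 : 0 < exp (-(π*M^2*(exp u)^4)) := exp_pos _
  have b3 := mono_bound 3 M hM u hu
  have b2 := mono_bound 2 M hM u hu
  have b1 := mono_bound 1 M hM u hu
  norm_num [Nat.factorial] at b3 b2 b1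
  have habs : |(-8*π^3*M^6*(exp u)^13 + 30*π^2*M^4*(exp u)^9 - 15*π*M^2*(exp u)^5)
      * exp (-(π*M^2*(exp u)^4))|
      ≤ 8*π^3*(M^6*(exp u)^13*exp (-(π*M^2*(exp u)^4)))
        + 30*π^2*(M^4*(exp u)^9*exp (-(π*M^2*(exp u)^4)))
        + 15*π*(M^2*(exp u)^5*exp (-(π*M^2*(exp u)^4))) := by
    rw [abs_mul, abs_of_pos hQ0]
    have h1 : (0:ℝ) ≤ 8*π^3*M^6*(exp u)^13 := by positivity
    have h2 : (0:ℝ) ≤ 30*π^2*M^4*(exp u)^9 := by positivity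
    have h3 : (0:ℝ) ≤ 15*π*M^2*(exp u)^5 := by positivity
    have h4 : |(-8*π^3*M^6*(exp u)^13 + 30*π^2*M^4*(exp u)^9 - 15*π*M^2*(exp u)^5)|
        ≤ 8*π^3*M^6*(exp u)^13 + 30*π^2*M^4*(exp u)^9 + 15*π*M^2*(exp u)^5 := by
      rw [abs_le]; constructor <;> linarith
    nlinarith [mul_le_mul_of_nonneg_right h4 hQ0.le]
  refine habs.trans ?_
  calc 8*π^3*(M^6*(exp u)^13*exp (-(π*M^2*(exp u)^4)))
        + 30*π^2*(M^4*(exp u)^9*exp (-(π*M^2*(exp u)^4)))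
        + 15*π*(M^2*(exp u)^5*exp (-(π*M^2*(exp u)^4)))
      ≤ 8*π^3*(24*exp 3/(π^4*M^2)) + 30*π^2*(6*exp 3/(π^3*M^2)) + 15*π*(2*exp 3/(π^2*M^2)) := by
        have := add_le_add (add_le_add
          (mul_le_mul_of_nonneg_left b3 (by positivity : (0:ℝ) ≤ 8*π^3))
          (mul_le_mul_of_nonneg_left b2 (by positivity : (0:ℝ) ≤ 30*π^2)))
          (mul_le_mul_of_nonneg_left b1 (by positivity : (0:ℝ) ≤ 15*π))
        linarith
    _ = 402*exp 3/(π*M^2) := by field_simp; ring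
    _ ≤ 3000 / M^2 := by
        rw [div_le_div_iff₀ (by positivity) (by positivity)]
        have hM2 : (0:ℝ) < M^2 := by positivity
        nlinarith [exp3_le, Real.pi_gt_d6, hM2, Real.exp_pos 3]

lemma abs_he_le' (m : ℕ) (u : ℝ) (hu : -1 ≤ u) :
    |(32*π^4*((m:ℝ)+1)^8*(exp u)^17 - 224*π^3*((m:ℝ)+1)^6*(exp u)^13
      + 330*π^2*((m:ℝ)+1)^4*(exp u)^9 - 75*π*((m:ℝ)+1)^2*(exp u)^5)
    * exp (-(π*((m:ℝ)+1)^2) * (exp u)^4)| ≤ 80000 / ((m:ℝ)+1)^2 := by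
  have hm : (0:ℝ) ≤ (m:ℝ) := Nat.cast_nonneg m
  set M : ℝ := (m:ℝ)+1 with hMdef
  have hM : (1:ℝ) ≤ M := by linarith
  have hM0 : (0:ℝ) < M := by linarith
  have hπ := Real.pi_pos
  have hE0 := exp_pos u
  rw [show -(π*M^2) * (exp u)^4 = -(π*M^2*(exp u)^4) by ring]
  have hQ0 : 0 < exp (-(π*M^2*(exp u)^4)) := exp_pos _
  have b4 := mono_bound 4 M hM u hu
  have b3 := mono_bound 3 M hM u hu
  have b2 := mono_bound 2 M hM u hu
  have b1 := mono_bound 1 M hM u hu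
  norm_num [Nat.factorial] at b4 b3 b2 b1
  have habs : |(32*π^4*M^8*(exp u)^17 - 224*π^3*M^6*(exp u)^13
      + 330*π^2*M^4*(exp u)^9 - 75*π*M^2*(exp u)^5) * exp (-(π*M^2*(exp u)^4))|
      ≤ 32*π^4*(M^8*(exp u)^17*exp (-(π*M^2*(exp u)^4)))
        + 224*π^3*(M^6*(exp u)^13*exp (-(π*M^2*(exp u)^4)))
        + 330*π^2*(M^4*(exp u)^9*exp (-(π*M^2*(exp u)^4)))
        + 75*π*(M^2*(exp u)^5*exp (-(π*M^2*(exp u)^4))) := by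
    rw [abs_mul, abs_of_pos hQ0]
    have h1 : (0:ℝ) ≤ 32*π^4*M^8*(exp u)^17 := by positivity
    have h2 : (0:ℝ) ≤ 224*π^3*M^6*(exp u)^13 := by positivity
    have h3 : (0:ℝ) ≤ 330*π^2*M^4*(exp u)^9 := by positivity
    have h5 : (0:ℝ) ≤ 75*π*M^2*(exp u)^5 := by positivity
    have h4 : |(32*π^4*M^8*(exp u)^17 - 224*π^3*M^6*(exp u)^13
        + 330*π^2*M^4*(exp u)^9 - 75*π*M^2*(exp u)^5)|
        ≤ 32*π^4*M^8*(exp u)^17 + 224*π^3*M^6*(exp u)^13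
          + 330*π^2*M^4*(exp u)^9 + 75*π*M^2*(exp u)^5 := by
      rw [abs_le]; constructor <;> linarith
    nlinarith [mul_le_mul_of_nonneg_right h4 hQ0.le]
  refine habs.trans ?_
  calc 32*π^4*(M^8*(exp u)^17*exp (-(π*M^2*(exp u)^4)))
        + 224*π^3*(M^6*(exp u)^13*exp (-(π*M^2*(exp u)^4)))
        + 330*π^2*(M^4*(exp u)^9*exp (-(π*M^2*(exp u)^4)))
        + 75*π*(M^2*(exp u)^5*exp (-(π*M^2*(exp u)^4)))
      ≤ 32*π^4*(120*exp 3/(π^5*M^2)) + 224*π^3*(24*exp 3/(π^4*M^2))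
        + 330*π^2*(6*exp 3/(π^3*M^2)) + 75*π*(2*exp 3/(π^2*M^2)) := by
        have := add_le_add (add_le_add (add_le_add
          (mul_le_mul_of_nonneg_left b4 (by positivity : (0:ℝ) ≤ 32*π^4))
          (mul_le_mul_of_nonneg_left b3 (by positivity : (0:ℝ) ≤ 224*π^3)))
          (mul_le_mul_of_nonneg_left b2 (by positivity : (0:ℝ) ≤ 330*π^2)))
          (mul_le_mul_of_nonneg_left b1 (by positivity : (0:ℝ) ≤ 75*π))
        linarith
    _ = 11346*exp 3/(π*M^2) := by field_simp; ring
    _ ≤ 80000 / M^2 := by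
        rw [div_le_div_iff₀ (by positivity) (by positivity)]
        have hM2 : (0:ℝ) < M^2 := by positivity
        nlinarith [exp3_le, Real.pi_gt_d6, hM2, Real.exp_pos 3]


lemma abs_fe_le (m : ℕ) (u : ℝ) (hu : -1 ≤ u) : |fe m u| ≤ 200 / ((m:ℝ)+1)^2 := by
  unfold fe; exact abs_fe_le' m u hu

lemma abs_ge_le (m : ℕ) (u : ℝ) (hu : -1 ≤ u) : |ge m u| ≤ 3000 / ((m:ℝ)+1)^2 := by
  unfold ge; exact abs_ge_le' m u hu

lemma abs_he_le (m : ℕ) (u : ℝ) (hu : -1 ≤ u) : |he m u| ≤ 80000 / ((m:ℝ)+1)^2 := by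
  unfold he; exact abs_he_le' m u hu






lemma summable_C (C : ℝ) : Summable (fun m : ℕ => C / ((m:ℝ)+1)^2) := by
  have h1 : Summable (fun n : ℕ => (1:ℝ) / (n:ℝ)^2) :=
    Real.summable_one_div_nat_pow.mpr (by norm_num)
  have h2 : Summable (fun m : ℕ => (1:ℝ) / ((m:ℝ)+1)^2) := by
    have := (summable_nat_add_iff 1).mpr h1
    refine this.congr fun m => ?_
    push_cast; ring
  simpa [div_eq_mul_inv, mul_comm] using h2.mul_left C

lemma summable_fe (u : ℝ) (hu : -1 ≤ u) : Summable (fun m => fe m u) :=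
  Summable.of_norm_bounded (summable_C 200) fun m => by
    rw [Real.norm_eq_abs]; exact abs_fe_le m u hu

lemma summable_ge (u : ℝ) (hu : -1 ≤ u) : Summable (fun m => ge m u) :=
  Summable.of_norm_bounded (summable_C 3000) fun m => by
    rw [Real.norm_eq_abs]; exact abs_ge_le m u hu

lemma summable_he (u : ℝ) (hu : -1 ≤ u) : Summable (fun m => he m u) :=
  Summable.of_norm_bounded (summable_C 80000) fun m => by
    rw [Real.norm_eq_abs]; exact abs_he_le m u hu

lemma hasDerivAt_Phi (y : ℝ) (hy : y ∈ Set.Ioi (-1:ℝ)) :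
    HasDerivAt Phi (∑' m, ge m y) y := by
  have h := hasDerivAt_tsum_of_isPreconnected (summable_C 3000) isOpen_Ioi
    isPreconnected_Ioi (fun n z _ => hasDerivAt_fe n z)
    (fun n z hz => by rw [Real.norm_eq_abs]; exact abs_ge_le n z (le_of_lt hz))
    (show (0:ℝ) ∈ Set.Ioi (-1:ℝ) by norm_num)
    (summable_fe 0 (by norm_num)) hy
  have hP : Phi = fun z => ∑' m, fe m z := funext Phi_eq
  rw [hP]; exact h

lemma hasDerivAt_G (y : ℝ) (hy : y ∈ Set.Ioi (-1:ℝ)) :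
    HasDerivAt (fun z => ∑' m, ge m z) (∑' m, he m y) y :=
  hasDerivAt_tsum_of_isPreconnected (summable_C 80000) isOpen_Ioi
    isPreconnected_Ioi (fun n z _ => hasDerivAt_ge n z)
    (fun n z hz => by rw [Real.norm_eq_abs]; exact abs_he_le n z (le_of_lt hz))
    (show (0:ℝ) ∈ Set.Ioi (-1:ℝ) by norm_num)
    (summable_ge 0 (by norm_num)) hy

lemma deriv_Phi_eq (u : ℝ) (hu : 0 ≤ u) : deriv Phi u = ∑' m, ge m u :=
  (hasDerivAt_Phi u (by simp only [Set.mem_Ioi]; linarith)).deriv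

lemma deriv2_Phi_eq (u : ℝ) (hu : 0 ≤ u) : deriv (deriv Phi) u = ∑' m, he m u := by
  have hmem : Set.Ioi (-1:ℝ) ∈ nhds u :=
    isOpen_Ioi.mem_nhds (by simp only [Set.mem_Ioi]; linarith)
  have hev : deriv Phi =ᶠ[nhds u] (fun z => ∑' m, ge m z) :=
    Filter.eventually_of_mem hmem fun y hy => (hasDerivAt_Phi y hy).deriv
  rw [hev.deriv_eq]
  exact (hasDerivAt_G u (by simp only [Set.mem_Ioi]; linarith)).deriv

-- tail comparison series
noncomputable def tb (x : ℝ) (m : ℕ) : ℝ := ((m:ℝ)+2)^8 * exp (-(((m:ℝ)+2)^2-4)*x)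

lemma tb_nonneg (x : ℝ) (m : ℕ) : 0 ≤ tb x m := by unfold tb; positivity

lemma tb_zero (x : ℝ) : tb x 0 = 256 := by unfold tb; norm_num

lemma exp_nine : (6561:ℝ) ≤ exp 9 := by
  have h : exp 9 = exp 1 ^ 9 := by rw [← Real.exp_nat_mul]; norm_num
  have h1 : (2.7:ℝ) ≤ exp 1 := by nlinarith [Real.exp_one_gt_d9]
  have h2 : (2.7:ℝ)^9 ≤ exp 1 ^ 9 := pow_le_pow_left₀ (by norm_num) h1 9
  rw [h]; nlinarith [h2]

lemma key_num (k x : ℝ) (hk3 : 3 ≤ k) (hx : π ≤ x) :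
    9 + (8/3*k - 8) + -(k^2-4)*x ≤ -(k-3)*Real.log 2 := by
  have hπ := Real.pi_gt_d6
  have hlog2 := Real.log_two_lt_d9
  have hlog2' : 0 < Real.log 2 := Real.log_pos (by norm_num)
  have hk24 : (0:ℝ) ≤ k^2 - 4 := by nlinarith
  have hxx : (k^2-4)*π ≤ (k^2-4)*x := mul_le_mul_of_nonneg_left hx hk24
  have p1 : (k^2-4)*3.141592 ≤ (k^2-4)*π := mul_le_mul_of_nonneg_left hπ.le hk24
  have p2 : (k-3)*Real.log 2 ≤ (k-3)*0.6931471808 :=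
    mul_le_mul_of_nonneg_left hlog2.le (by linarith)
  nlinarith [sq_nonneg (k-3), hxx, p1, p2]

lemma tb_succ_le (x : ℝ) (hx : π ≤ x) (m : ℕ) : tb x (m+1) ≤ (1/2:ℝ)^m := by
  have hπ := Real.pi_gt_d6
  have hlog2 := Real.log_two_lt_d9
  have hlog2' := Real.log_pos (by norm_num : (1:ℝ) < 2)
  unfold tb
  push_cast
  set k : ℝ := (m:ℝ)+3 with hk
  have hk3 : (3:ℝ) ≤ k := by have : (0:ℝ) ≤ (m:ℝ) := Nat.cast_nonneg m; simp only [hk]; linarith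
  have hk0 : (0:ℝ) < k := by linarith
  have e1 : k ≤ 3*exp (k/3-1) := by
    have := Real.add_one_le_exp (k/3-1); linarith
  have e2 : k^8 ≤ 6561 * exp ((8/3)*k - 8) := by
    have h2 : k^8 ≤ (3*exp (k/3-1))^8 := pow_le_pow_left₀ hk0.le e1 8
    have h3 : (3*exp (k/3-1))^8 = 6561 * exp ((8/3)*k-8) := by
      rw [mul_pow, ← Real.exp_nat_mul]
      norm_num; ring_nf
    linarith [h2, h3.le, h3.ge]
  have harg : ((m:ℝ)+1+2) = k := by rw [hk]; ring
  rw [show ((m:ℝ)+1+2)^8 * exp (-(((m:ℝ)+1+2)^2-4)*x) = k^8 * exp (-(k^2-4)*x) by rw [harg]]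
  have hhalf : (1/2:ℝ)^m = exp (-(m:ℝ)*Real.log 2) := by
    rw [show (-(m:ℝ)*Real.log 2) = (m:ℝ)*(-Real.log 2) by ring, Real.exp_nat_mul]
    rw [Real.exp_neg, Real.exp_log (by norm_num : (0:ℝ) < 2)]
    norm_num
  have hexp0 : (0:ℝ) < exp (-(k^2-4)*x) := exp_pos _
  calc k^8 * exp (-(k^2-4)*x) ≤ 6561 * exp ((8/3)*k-8) * exp (-(k^2-4)*x) := by
        nlinarith [e2, hexp0]
    _ ≤ exp 9 * exp ((8/3)*k-8) * exp (-(k^2-4)*x) := by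
        nlinarith [exp_nine, exp_pos ((8/3)*k-8), hexp0, mul_pos (exp_pos ((8/3)*k-8)) hexp0]
    _ = exp (9 + ((8/3)*k-8) + (-(k^2-4)*x)) := by rw [← Real.exp_add, ← Real.exp_add]
    _ ≤ exp (-(m:ℝ)*Real.log 2) := by
        apply Real.exp_le_exp.mpr
        have hm : (m:ℝ) = k - 3 := by rw [hk]; ring
        rw [hm]
        exact key_num k x hk3 hx
    _ = (1/2:ℝ)^m := hhalf.symm

lemma summable_tb (x : ℝ) (hx : π ≤ x) : Summable (tb x) := by
  rw [← summable_nat_add_iff 1]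
  apply Summable.of_nonneg_of_le (fun m => tb_nonneg x (m+1)) (tb_succ_le x hx)
  exact summable_geometric_of_lt_one (by norm_num) (by norm_num)

lemma tsum_tb_le (x : ℝ) (hx : π ≤ x) : ∑' m, tb x m ≤ 258 := by
  rw [Summable.tsum_eq_zero_add (summable_tb x hx), tb_zero]
  have h1 : ∑' m, tb x (m+1) ≤ ∑' m : ℕ, (1/2:ℝ)^m := by
    apply Summable.tsum_le_tsum (tb_succ_le x hx)
    · exact (summable_nat_add_iff 1).mpr (summable_tb x hx)
    · exact summable_geometric_of_lt_one (by norm_num) (by norm_num)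
  have h2 : ∑' m : ℕ, (1/2:ℝ)^m = 2 := by
    rw [tsum_geometric_of_lt_one (by norm_num) (by norm_num)]; norm_num
  linarith



lemma fe_succ_le (m : ℕ) (u : ℝ) (hu : 0 ≤ u) :
    |fe (m+1) u| ≤ (2*π*(exp u)^5*(π*(exp u)^4)*exp (-(4*(π*(exp u)^4))))
      * tb (π*(exp u)^4) m := by
  have hπ := Real.pi_gt_d6
  have hE0 : (0:ℝ) < exp u := exp_pos u
  have hE1 : (1:ℝ) ≤ exp u := by
    calc (1:ℝ) = exp 0 := by simp
      _ ≤ exp u := exp_le_exp.mpr hu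
  have hm0 : (0:ℝ) ≤ (m:ℝ) := Nat.cast_nonneg m
  unfold fe tb
  push_cast
  rw [show (m:ℝ)+1+1 = (m:ℝ)+2 by ring]
  set E : ℝ := exp u with hE
  set M : ℝ := (m:ℝ)+2 with hM
  have hM2 : (2:ℝ) ≤ M := by simp only [hM]; linarith
  have hM1 : (1:ℝ) ≤ M := by linarith
  have hM0 : (0:ℝ) < M := by linarith
  set X : ℝ := π*E^4 with hX
  have hXpi : π ≤ X := by
    rw [hX]; nlinarith [pow_le_pow_left₀ (by norm_num : (0:ℝ) ≤ 1) hE1 4]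
  have hX0 : (0:ℝ) < X := by nlinarith
  set y : ℝ := M^2*X with hy
  have hM4 : (4:ℝ) ≤ M^2 := by nlinarith
  have hy4 : 4*X ≤ y := by
    rw [hy]; nlinarith [mul_le_mul_of_nonneg_right hM4 hX0.le]
  have hy0 : (12:ℝ) ≤ y := by nlinarith
  have harg : -(π*M^2)*E^4 = -((M^2-4)*X) + -(4*X) := by rw [hX]; ring
  have hbr : 2*π^2*M^4*E^9 - 3*π*M^2*E^5 = π*M^2*E^5*(2*y-3) := by
    rw [hy, hX]; ring
  rw [harg, Real.exp_add, hbr]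
  have hnn : (0:ℝ) ≤ π*M^2*E^5*(2*y-3) * (exp (-((M^2-4)*X)) * exp (-(4*X))) := by
    have : (0:ℝ) ≤ 2*y-3 := by linarith
    positivity
  rw [abs_of_nonneg hnn]
  calc π*M^2*E^5*(2*y-3) * (exp (-((M^2-4)*X)) * exp (-(4*X)))
      ≤ π*M^2*E^5*(2*y) * (exp (-((M^2-4)*X)) * exp (-(4*X))) := by
        have h23 : 2*y-3 ≤ 2*y := by linarith
        have hq : (0:ℝ) < exp (-((M^2-4)*X)) * exp (-(4*X)) := by positivity
        nlinarith [mul_pos (mul_pos (mul_pos Real.pi_pos (mul_pos hM0 hM0)) (pow_pos hE0 5)) hq]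
    _ = (2*π*E^5*X*exp (-(4*X))) * (M^4 * exp (-((M^2-4)*X))) := by rw [hy]; ring
    _ ≤ (2*π*E^5*X*exp (-(4*X))) * (M^8 * exp (-((M^2-4)*X))) := by
        have hM48 : M^4 ≤ M^8 := pow_le_pow_right₀ hM1 (by norm_num)
        have hc : (0:ℝ) ≤ 2*π*E^5*X*exp (-(4*X)) := by positivity
        have he' : (0:ℝ) < exp (-((M^2-4)*X)) := exp_pos _
        nlinarith [mul_le_mul_of_nonneg_right hM48 he'.le]
    _ = (2*π*E^5*(π*E^4)*exp (-(4*(π*E^4)))) * (M^8 * exp (-((M^2-4)*(π*E^4)))) := by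
        rw [← hX]
    _ = (2*π*E^5*(π*E^4)*exp (-(4*(π*E^4)))) * (M^8 * exp (-(M^2-4)*(π*E^4))) := by
        rw [neg_mul]



lemma ge_succ_le (m : ℕ) (u : ℝ) (hu : 0 ≤ u) :
    |ge (m+1) u| ≤ (8*π*(exp u)^5*(π*(exp u)^4)^2*exp (-(4*(π*(exp u)^4))))
      * tb (π*(exp u)^4) m := by
  have hπ := Real.pi_gt_d6
  have hE0 : (0:ℝ) < exp u := exp_pos u
  have hE1 : (1:ℝ) ≤ exp u := by
    calc (1:ℝ) = exp 0 := by simp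
      _ ≤ exp u := exp_le_exp.mpr hu
  have hm0 : (0:ℝ) ≤ (m:ℝ) := Nat.cast_nonneg m
  unfold ge tb
  push_cast
  rw [show (m:ℝ)+1+1 = (m:ℝ)+2 by ring]
  set E : ℝ := exp u with hE
  set M : ℝ := (m:ℝ)+2 with hM
  have hM2 : (2:ℝ) ≤ M := by simp only [hM]; linarith
  have hM1 : (1:ℝ) ≤ M := by linarith
  have hM0 : (0:ℝ) < M := by linarith
  set X : ℝ := π*E^4 with hX
  have hXpi : π ≤ X := by
    rw [hX]; nlinarith [pow_le_pow_left₀ (by norm_num : (0:ℝ) ≤ 1) hE1 4]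
  have hX0 : (0:ℝ) < X := by nlinarith
  set y : ℝ := M^2*X with hy
  have hM4 : (4:ℝ) ≤ M^2 := by nlinarith
  have hy4 : 4*X ≤ y := by
    rw [hy]; nlinarith [mul_le_mul_of_nonneg_right hM4 hX0.le]
  have hy0 : (12:ℝ) ≤ y := by nlinarith
  have harg : -(π*M^2)*E^4 = -((M^2-4)*X) + -(4*X) := by rw [hX]; ring
  have hbr : -8*π^3*M^6*E^13 + 30*π^2*M^4*E^9 - 15*π*M^2*E^5
      = π*M^2*E^5*(-8*y^2+30*y-15) := by rw [hy, hX]; ring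
  rw [harg, Real.exp_add, hbr]
  rw [abs_mul, abs_mul, abs_of_nonneg (by positivity : (0:ℝ) ≤ π*M^2*E^5),
    abs_of_nonneg (by positivity : (0:ℝ) ≤ exp (-((M^2-4)*X)) * exp (-(4*X)))]
  have habs : |(-8*y^2+30*y-15)| ≤ 8*y^2 := by
    rw [abs_le]; constructor
    · nlinarith
    · nlinarith [sq_nonneg (4*y-15/4)]
  calc π*M^2*E^5*|(-8*y^2+30*y-15)| * (exp (-((M^2-4)*X)) * exp (-(4*X)))
      ≤ π*M^2*E^5*(8*y^2) * (exp (-((M^2-4)*X)) * exp (-(4*X))) := by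
        exact mul_le_mul_of_nonneg_right
          (mul_le_mul_of_nonneg_left habs (by positivity : (0:ℝ) ≤ π*M^2*E^5))
          (by positivity : (0:ℝ) ≤ exp (-((M^2-4)*X)) * exp (-(4*X)))
    _ = (8*π*E^5*X^2*exp (-(4*X))) * (M^6 * exp (-((M^2-4)*X))) := by rw [hy]; ring
    _ ≤ (8*π*E^5*X^2*exp (-(4*X))) * (M^8 * exp (-((M^2-4)*X))) := by
        have hM48 : M^6 ≤ M^8 := pow_le_pow_right₀ hM1 (by norm_num)
        have he' : (0:ℝ) < exp (-((M^2-4)*X)) := exp_pos _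
        exact mul_le_mul_of_nonneg_left (mul_le_mul_of_nonneg_right hM48 he'.le)
          (by positivity : (0:ℝ) ≤ 8*π*E^5*X^2*exp (-(4*X)))
    _ = (8*π*E^5*(π*E^4)^2*exp (-(4*(π*E^4)))) * (M^8 * exp (-(M^2-4)*(π*E^4))) := by
        rw [← hX, neg_mul]

lemma he_succ_le (m : ℕ) (u : ℝ) (hu : 0 ≤ u) :
    |he (m+1) u| ≤ (32*π*(exp u)^5*(π*(exp u)^4)^3*exp (-(4*(π*(exp u)^4))))
      * tb (π*(exp u)^4) m := by
  have hπ := Real.pi_gt_d6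
  have hE0 : (0:ℝ) < exp u := exp_pos u
  have hE1 : (1:ℝ) ≤ exp u := by
    calc (1:ℝ) = exp 0 := by simp
      _ ≤ exp u := exp_le_exp.mpr hu
  have hm0 : (0:ℝ) ≤ (m:ℝ) := Nat.cast_nonneg m
  unfold he tb
  push_cast
  rw [show (m:ℝ)+1+1 = (m:ℝ)+2 by ring]
  set E : ℝ := exp u with hE
  set M : ℝ := (m:ℝ)+2 with hM
  have hM2 : (2:ℝ) ≤ M := by simp only [hM]; linarith
  have hM1 : (1:ℝ) ≤ M := by linarith
  have hM0 : (0:ℝ) < M := by linarith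
  set X : ℝ := π*E^4 with hX
  have hXpi : π ≤ X := by
    rw [hX]; nlinarith [pow_le_pow_left₀ (by norm_num : (0:ℝ) ≤ 1) hE1 4]
  have hX0 : (0:ℝ) < X := by nlinarith
  set y : ℝ := M^2*X with hy
  have hM4 : (4:ℝ) ≤ M^2 := by nlinarith
  have hy4 : 4*X ≤ y := by
    rw [hy]; nlinarith [mul_le_mul_of_nonneg_right hM4 hX0.le]
  have hy0 : (12:ℝ) ≤ y := by nlinarith
  have harg : -(π*M^2)*E^4 = -((M^2-4)*X) + -(4*X) := by rw [hX]; ring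
  have hbr : 32*π^4*M^8*E^17 - 224*π^3*M^6*E^13 + 330*π^2*M^4*E^9 - 75*π*M^2*E^5
      = π*M^2*E^5*(32*y^3-224*y^2+330*y-75) := by rw [hy, hX]; ring
  rw [harg, Real.exp_add, hbr]
  rw [abs_mul, abs_mul, abs_of_nonneg (by positivity : (0:ℝ) ≤ π*M^2*E^5),
    abs_of_nonneg (by positivity : (0:ℝ) ≤ exp (-((M^2-4)*X)) * exp (-(4*X)))]
  have habs : |(32*y^3-224*y^2+330*y-75)| ≤ 32*y^3 := by
    rw [abs_le]; constructor
    · nlinarith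
    · nlinarith
  calc π*M^2*E^5*|(32*y^3-224*y^2+330*y-75)| * (exp (-((M^2-4)*X)) * exp (-(4*X)))
      ≤ π*M^2*E^5*(32*y^3) * (exp (-((M^2-4)*X)) * exp (-(4*X))) := by
        exact mul_le_mul_of_nonneg_right
          (mul_le_mul_of_nonneg_left habs (by positivity : (0:ℝ) ≤ π*M^2*E^5))
          (by positivity : (0:ℝ) ≤ exp (-((M^2-4)*X)) * exp (-(4*X)))
    _ = (32*π*E^5*X^3*exp (-(4*X))) * (M^8 * exp (-((M^2-4)*X))) := by rw [hy]; ring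
    _ = (32*π*E^5*(π*E^4)^3*exp (-(4*(π*E^4)))) * (M^8 * exp (-(M^2-4)*(π*E^4))) := by
        rw [← hX, neg_mul]



lemma hXpi' (u : ℝ) (hu : 0 ≤ u) : π ≤ π*(exp u)^4 := by
  have hE1 : (1:ℝ) ≤ exp u := by
    calc (1:ℝ) = exp 0 := by simp
      _ ≤ exp u := exp_le_exp.mpr hu
  nlinarith [pow_le_pow_left₀ (by norm_num : (0:ℝ) ≤ 1) hE1 4, Real.pi_pos]

lemma tail_fe (u : ℝ) (hu : 0 ≤ u) :
    |∑' m, fe (m+1) u| ≤ 516*(π*(exp u)^4)*(π*(exp u)^5*exp (-(π*(exp u)^4)))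
      * exp (-(3*(π*(exp u)^4))) := by
  have hXpi : π ≤ π*(exp u)^4 := hXpi' u hu
  have hE0 : (0:ℝ) < exp u := exp_pos u
  have hsum : Summable (fun m => fe (m+1) u) :=
    (summable_nat_add_iff 1).mpr (summable_fe u (by linarith))
  have habs : Summable (fun m => |fe (m+1) u|) := hsum.abs
  have hC0 : (0:ℝ) ≤ 2*π*(exp u)^5*(π*(exp u)^4)*exp (-(4*(π*(exp u)^4))) := by positivity
  calc |∑' m, fe (m+1) u| ≤ ∑' m, |fe (m+1) u| := by
        have := norm_tsum_le_tsum_norm (f := fun m => fe (m+1) u)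
          (by simpa [Real.norm_eq_abs] using habs)
        simpa [Real.norm_eq_abs] using this
    _ ≤ ∑' m, (2*π*(exp u)^5*(π*(exp u)^4)*exp (-(4*(π*(exp u)^4)))) * tb (π*(exp u)^4) m :=
        Summable.tsum_le_tsum (fun m => fe_succ_le m u hu) habs
          ((summable_tb _ hXpi).mul_left _)
    _ = (2*π*(exp u)^5*(π*(exp u)^4)*exp (-(4*(π*(exp u)^4)))) * ∑' m, tb (π*(exp u)^4) m :=
        tsum_mul_left
    _ ≤ (2*π*(exp u)^5*(π*(exp u)^4)*exp (-(4*(π*(exp u)^4)))) * 258 :=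
        mul_le_mul_of_nonneg_left (tsum_tb_le _ hXpi) hC0
    _ = 516*(π*(exp u)^4)*(π*(exp u)^5*exp (-(π*(exp u)^4))) * exp (-(3*(π*(exp u)^4))) := by
        rw [show -(4*(π*(exp u)^4)) = -(π*(exp u)^4) + -(3*(π*(exp u)^4)) by ring, Real.exp_add]
        ring


lemma tail_ge (u : ℝ) (hu : 0 ≤ u) :
    |∑' m, ge (m+1) u| ≤ 2064*(π*(exp u)^4)^2*(π*(exp u)^5*exp (-(π*(exp u)^4)))
      * exp (-(3*(π*(exp u)^4))) := by
  have hXpi : π ≤ π*(exp u)^4 := hXpi' u hu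
  have hE0 : (0:ℝ) < exp u := exp_pos u
  have hsum : Summable (fun m => ge (m+1) u) :=
    (summable_nat_add_iff 1).mpr (summable_ge u (by linarith))
  have habs : Summable (fun m => |ge (m+1) u|) := hsum.abs
  have hC0 : (0:ℝ) ≤ 8*π*(exp u)^5*(π*(exp u)^4)^2*exp (-(4*(π*(exp u)^4))) := by positivity
  calc |∑' m, ge (m+1) u| ≤ ∑' m, |ge (m+1) u| := by
        have := norm_tsum_le_tsum_norm (f := fun m => ge (m+1) u)
          (by simpa [Real.norm_eq_abs] using habs)
        simpa [Real.norm_eq_abs] using this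
    _ ≤ ∑' m, (8*π*(exp u)^5*(π*(exp u)^4)^2*exp (-(4*(π*(exp u)^4)))) * tb (π*(exp u)^4) m :=
        Summable.tsum_le_tsum (fun m => ge_succ_le m u hu) habs
          ((summable_tb _ hXpi).mul_left _)
    _ = (8*π*(exp u)^5*(π*(exp u)^4)^2*exp (-(4*(π*(exp u)^4)))) * ∑' m, tb (π*(exp u)^4) m :=
        tsum_mul_left
    _ ≤ (8*π*(exp u)^5*(π*(exp u)^4)^2*exp (-(4*(π*(exp u)^4)))) * 258 :=
        mul_le_mul_of_nonneg_left (tsum_tb_le _ hXpi) hC0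
    _ = 2064*(π*(exp u)^4)^2*(π*(exp u)^5*exp (-(π*(exp u)^4))) * exp (-(3*(π*(exp u)^4))) := by
        rw [show -(4*(π*(exp u)^4)) = -(π*(exp u)^4) + -(3*(π*(exp u)^4)) by ring, Real.exp_add]
        ring

lemma tail_he (u : ℝ) (hu : 0 ≤ u) :
    |∑' m, he (m+1) u| ≤ 8256*(π*(exp u)^4)^3*(π*(exp u)^5*exp (-(π*(exp u)^4)))
      * exp (-(3*(π*(exp u)^4))) := by
  have hXpi : π ≤ π*(exp u)^4 := hXpi' u hu
  have hE0 : (0:ℝ) < exp u := exp_pos u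
  have hsum : Summable (fun m => he (m+1) u) :=
    (summable_nat_add_iff 1).mpr (summable_he u (by linarith))
  have habs : Summable (fun m => |he (m+1) u|) := hsum.abs
  have hC0 : (0:ℝ) ≤ 32*π*(exp u)^5*(π*(exp u)^4)^3*exp (-(4*(π*(exp u)^4))) := by positivity
  calc |∑' m, he (m+1) u| ≤ ∑' m, |he (m+1) u| := by
        have := norm_tsum_le_tsum_norm (f := fun m => he (m+1) u)
          (by simpa [Real.norm_eq_abs] using habs)
        simpa [Real.norm_eq_abs] using this
    _ ≤ ∑' m, (32*π*(exp u)^5*(π*(exp u)^4)^3*exp (-(4*(π*(exp u)^4)))) * tb (π*(exp u)^4) m :=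
        Summable.tsum_le_tsum (fun m => he_succ_le m u hu) habs
          ((summable_tb _ hXpi).mul_left _)
    _ = (32*π*(exp u)^5*(π*(exp u)^4)^3*exp (-(4*(π*(exp u)^4)))) * ∑' m, tb (π*(exp u)^4) m :=
        tsum_mul_left
    _ ≤ (32*π*(exp u)^5*(π*(exp u)^4)^3*exp (-(4*(π*(exp u)^4)))) * 258 :=
        mul_le_mul_of_nonneg_left (tsum_tb_le _ hXpi) hC0
    _ = 8256*(π*(exp u)^4)^3*(π*(exp u)^5*exp (-(π*(exp u)^4))) * exp (-(3*(π*(exp u)^4))) := by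
        rw [show -(4*(π*(exp u)^4)) = -(π*(exp u)^4) + -(3*(π*(exp u)^4)) by ring, Real.exp_add]
        ring


lemma final_ineq (X Kv s A B Q T T' T'' : ℝ)
    (hX : π ≤ X) (hKv : 0 < Kv) (hs : 0 < s)
    (hA : A = Kv*(2*X-3)) (hB : B = Kv*(-8*X^2+30*X-15))
    (hQ : Q = Kv*(32*X^3-224*X^2+330*X-75))
    (hT : |T| ≤ 516*X*Kv*s) (hT' : |T'| ≤ 2064*X^2*Kv*s) (hT'' : |T''| ≤ 8256*X^3*Kv*s)
    (hs1 : s*(12000*(1+3*(X-π))) ≤ 1) :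
    (A+T)*(Q+T'') - (B+T')^2 < 0 := by
  have hπ3 : (3.141592:ℝ) < π := Real.pi_gt_d6
  have hπu : π < 3.15 := Real.pi_lt_d2
  have hX0 : (0:ℝ) < X := by linarith
  have hs12 : s ≤ 1/12000 := by nlinarith [mul_nonneg hs.le (sub_nonneg.mpr hX)]
  -- |A| ≤ 2X Kv etc.
  have habsA : |A| ≤ Kv*(2*X) := by
    rw [hA, abs_mul, abs_of_pos hKv]
    have : |2*X-3| ≤ 2*X := by rw [abs_le]; constructor <;> nlinarith
    nlinarith [this, hKv]
  have habsB : |B| ≤ Kv*(8*X^2) := by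
    rw [hB, abs_mul, abs_of_pos hKv]
    have : |(-8*X^2+30*X-15)| ≤ 8*X^2 := by
      rw [abs_le]; constructor
      · nlinarith
      · nlinarith [sq_nonneg (4*X-15/4)]
    nlinarith [this, hKv]
  have habsQ : |Q| ≤ Kv*(32*X^3) := by
    rw [hQ, abs_mul, abs_of_pos hKv]
    have h1 : (0:ℝ) ≤ X - 3.141592 := by linarith
    have : |(32*X^3-224*X^2+330*X-75)| ≤ 32*X^3 := by
      rw [abs_le]; constructor
      · nlinarith [mul_nonneg h1 hX0.le, mul_nonneg (mul_nonneg h1 hX0.le) hX0.le]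
      · nlinarith [mul_nonneg h1 hX0.le, mul_nonneg (mul_nonneg h1 hX0.le) hX0.le]
    nlinarith [this, hKv]
  -- cross terms
  have hT0 : (0:ℝ) ≤ 516*X*Kv*s := by positivity
  have hT'0 : (0:ℝ) ≤ 2064*X^2*Kv*s := by positivity
  have hT''0 : (0:ℝ) ≤ 8256*X^3*Kv*s := by positivity
  have c1 : A*T'' ≤ 16512*X^4*Kv^2*s := by
    calc A*T'' ≤ |A*T''| := le_abs_self _
      _ = |A| * |T''| := abs_mul _ _
      _ ≤ (Kv*(2*X))*(8256*X^3*Kv*s) := mul_le_mul habsA hT'' (abs_nonneg _) (by positivity)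
      _ = 16512*X^4*Kv^2*s := by ring
  have c2 : Q*T ≤ 16512*X^4*Kv^2*s := by
    calc Q*T ≤ |Q*T| := le_abs_self _
      _ = |Q| * |T| := abs_mul _ _
      _ ≤ (Kv*(32*X^3))*(516*X*Kv*s) := mul_le_mul habsQ hT (abs_nonneg _) (by positivity)
      _ = 16512*X^4*Kv^2*s := by ring
  have c3 : -(2*B*T') ≤ 33024*X^4*Kv^2*s := by
    calc -(2*B*T') ≤ |2*B*T'| := neg_le_abs _
      _ = 2*(|B| * |T'|) := by rw [abs_mul, abs_mul]; norm_num; ring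
      _ ≤ 2*((Kv*(8*X^2))*(2064*X^2*Kv*s)) := by
          have := mul_le_mul habsB hT' (abs_nonneg _) (by positivity)
          linarith
      _ = 33024*X^4*Kv^2*s := by ring
  have c4 : T*T'' ≤ 4260096*X^4*Kv^2*s^2 := by
    calc T*T'' ≤ |T*T''| := le_abs_self _
      _ = |T| * |T''| := abs_mul _ _
      _ ≤ (516*X*Kv*s)*(8256*X^3*Kv*s) := mul_le_mul hT hT'' (abs_nonneg _) hT0
      _ = 4260096*X^4*Kv^2*s^2 := by ring
  have hmain : A*Q - B^2 = Kv^2*(-64*X^3+192*X^2-240*X) := by rw [hA, hB, hQ]; ring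
  have hmain2 : A*Q - B^2 ≤ -(128/5)*X^3*Kv^2 := by
    rw [hmain]
    have h1 : (0:ℝ) ≤ Kv^2*(X*(38.4*(X-2.5)^2)) := by positivity
    have h2 : Kv^2*(-64*X^3+192*X^2-240*X)
        = -(Kv^2*(X*(38.4*(X-2.5)^2))) + (-(128/5)*X^3*Kv^2) := by ring
    rw [h2]; linarith
  -- s-bounds
  have hXs : 66404*(X*s) ≤ 19.3 := by
    have h1 : s*π ≤ s*3.15 := mul_le_mul_of_nonneg_left hπu.le hs.le
    have h2 : s*3.15 ≤ (1/12000)*3.15 := mul_le_mul_of_nonneg_right hs12 (by norm_num)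
    linarith [hs1, hs.le]
  have h2 : 4260096*X^4*Kv^2*s^2 ≤ 355.008*X^3*Kv^2*(X*s) := by
    have h3 : 4260096*s^2 ≤ 355.008*s := by
      linarith [mul_le_mul_of_nonneg_left hs12 hs.le]
    calc 4260096*X^4*Kv^2*s^2 = (X^4*Kv^2)*(4260096*s^2) := by ring
      _ ≤ (X^4*Kv^2)*(355.008*s) := mul_le_mul_of_nonneg_left h3 (by positivity)
      _ = 355.008*X^3*Kv^2*(X*s) := by ring
  have expand : (A+T)*(Q+T'') - (B+T')^2
      = (A*Q - B^2) + (A*T'' + Q*T + -(2*B*T')) + (T*T'' - T'^2) := by ring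
  have hfin : (A*Q - B^2) + (A*T'' + Q*T + -(2*B*T')) + (T*T'' - T'^2) < 0 := by
    have hsq : (0:ℝ) ≤ T'^2 := sq_nonneg _
    have hpos : (0:ℝ) < X^3*Kv^2 := by positivity
    have hm0 : (0:ℝ) ≤ X^4*Kv^2*s := by positivity
    have hmul : (X^3*Kv^2)*(66404*(X*s)) ≤ (X^3*Kv^2)*19.3 :=
      mul_le_mul_of_nonneg_left hXs hpos.le
    linarith [c1, c2, c3, c4, hmain2, h2, hsq, hm0, hmul, hpos]
  linarith [expand.le, hfin, expand.ge]

lemma exp_pi_ge : (23:ℝ) ≤ exp π := by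
  have h1 : (3.141592:ℝ) < π := Real.pi_gt_d6
  have h2 : exp 3.141592 ≤ exp π := exp_le_exp.mpr h1.le
  have h3 : exp 3.141592 = exp 1 * exp 1 * exp 1 * exp 0.070796 * exp 0.070796 := by
    rw [← Real.exp_add, ← Real.exp_add, ← Real.exp_add, ← Real.exp_add]; norm_num
  have h4 : (1.070796:ℝ) ≤ exp 0.070796 := by
    have := Real.add_one_le_exp (0.070796:ℝ); linarith
  have h5 : (2.7182818:ℝ) ≤ exp 1 := by linarith [Real.exp_one_gt_d9]
  have h6 : (23:ℝ) ≤ 2.7182818^3 * 1.070796^2 := by norm_num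
  have h7 : 2.7182818^3 * 1.070796^2 ≤ exp 1 * exp 1 * exp 1 * exp 0.070796 * exp 0.070796 := by
    have e0 : (0:ℝ) < exp 1 := exp_pos 1
    have e1 : (0:ℝ) < exp 0.070796 := exp_pos _
    nlinarith [h4, h5, e0, e1, mul_pos e0 e0, mul_pos (mul_pos e0 e0) e0,
      mul_pos (mul_pos (mul_pos e0 e0) e0) e1]
  linarith [h3 ▸ h2]

lemma s_bound (X : ℝ) (hX : π ≤ X) :
    exp (-(3*X)) * (12000*(1+3*(X-π))) ≤ 1 := by
  have h0 : (0:ℝ) < 1+3*(X-π) := by nlinarith [Real.pi_pos]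
  have h1 : (12167:ℝ) ≤ exp (3*π) := by
    have : exp (3*π) = exp π * exp π * exp π := by
      rw [← Real.exp_add, ← Real.exp_add]; ring_nf
    rw [this]
    nlinarith [exp_pi_ge, exp_pos π]
  have h2 : exp (3*X) = exp (3*π) * exp (3*(X-π)) := by
    rw [← Real.exp_add]; ring_nf
  have h3 : 1+3*(X-π) ≤ exp (3*(X-π)) := by
    have := Real.add_one_le_exp (3*(X-π)); linarith
  have h4 : 12000*(1+3*(X-π)) ≤ exp (3*X) := by
    rw [h2]
    nlinarith [h1, h3, exp_pos (3*(X-π)), exp_pos (3*π), h0]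
  have h5 : exp (-(3*X)) * exp (3*X) = 1 := by
    rw [← Real.exp_add]; norm_num
  calc exp (-(3*X)) * (12000*(1+3*(X-π))) ≤ exp (-(3*X)) * exp (3*X) :=
        mul_le_mul_of_nonneg_left h4 (exp_pos _).le
    _ = 1 := h5


lemma fe_zero (u : ℝ) :
    fe 0 u = (π*(exp u)^5*exp (-(π*(exp u)^4))) * (2*(π*(exp u)^4) - 3) := by
  unfold fe; norm_num; ring

lemma ge_zero (u : ℝ) :
    ge 0 u = (π*(exp u)^5*exp (-(π*(exp u)^4)))
      * (-8*(π*(exp u)^4)^2 + 30*(π*(exp u)^4) - 15) := by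
  unfold ge; norm_num; ring

lemma he_zero (u : ℝ) :
    he 0 u = (π*(exp u)^5*exp (-(π*(exp u)^4)))
      * (32*(π*(exp u)^4)^3 - 224*(π*(exp u)^4)^2 + 330*(π*(exp u)^4) - 75) := by
  unfold he; norm_num; ring


theorem stmt_4 (u : ℝ) (hu : 0 ≤ u) :
    Phi u * deriv (deriv Phi) u - (deriv Phi u)^2 < 0 := by
  have hu1 : (-1:ℝ) ≤ u := by linarith
  rw [deriv2_Phi_eq u hu, deriv_Phi_eq u hu, Phi_eq]
  rw [Summable.tsum_eq_zero_add (summable_fe u hu1), Summable.tsum_eq_zero_add (summable_he u hu1),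
      Summable.tsum_eq_zero_add (summable_ge u hu1)]
  exact final_ineq (π*(exp u)^4) (π*(exp u)^5*exp (-(π*(exp u)^4)))
    (exp (-(3*(π*(exp u)^4))))
    (fe 0 u) (ge 0 u) (he 0 u) (∑' m, fe (m+1) u) (∑' m, ge (m+1) u) (∑' m, he (m+1) u)
    (hXpi' u hu) (by positivity) (exp_pos _)
    (fe_zero u) (ge_zero u) (he_zero u)
    (tail_fe u hu) (tail_ge u hu) (tail_he u hu)
    (s_bound _ (hXpi' u hu))
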